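/- Suppose f₁,…,f_M : ℝ^d → ℝ^d satisfy |f_i(x)| ≤ K, |f_i'(x)| ≤ L, and |f_i(x) − f_i(z) − f_i'(z)(x−z)| ≤ S|x−z|² for all x, z. Let φ(x) = {x + Δt f_i(x) : i} and ψ(x) = x + Δt·co({f_i(x)}_i). Then for all z: ψ(co(φ^(M−1)(z))) ⊆ co(φ^M(z)) + S K² (M(M−1)(2M−1)/3) Δt³ · B. -/

import Mathlib

open scoped Pointwise

/-- Image of a set under a set-valued map. -/
def setImage {E : Type*} (φ : E → Set E) (A : Set E) : Set E := ⋃ x ∈ A, φ x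

/-- `m`-fold iterated image of a point under a set-valued map. -/
def iterMap {E : Type*} (φ : E → Set E) : ℕ → E → Set E
  | 0, z => {z}
  | n + 1, z => setImage φ (iterMap φ n z)

open Finset in
/-- Variance inequality: the weighted mean minimizes weighted sum of squared distances. -/
lemma variance_le_aux {E : Type*} [NormedAddCommGroup E] [InnerProductSpace ℝ E]
    {ι : Type*} (t : Finset ι) (w : ι → ℝ) (x : ι → E) (y z : E)
    (hw0 : ∀ i ∈ t, 0 ≤ w i) (hw1 : ∑ i ∈ t, w i = 1)
    (hy : ∑ i ∈ t, w i • x i = y) :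
    ∑ i ∈ t, w i * ‖x i - y‖ ^ 2 ≤ ∑ i ∈ t, w i * ‖x i - z‖ ^ 2 := by
  have hzero : ∑ i ∈ t, w i • (x i - y) = 0 := by
    simp only [smul_sub, Finset.sum_sub_distrib, hy, ← Finset.sum_smul, hw1, one_smul, sub_self]
  have expand : ∀ i ∈ t, w i * ‖x i - z‖ ^ 2
      = w i * ‖x i - y‖ ^ 2 + 2 * (w i * (inner ℝ (x i - y) (y - z) : ℝ)) + w i * ‖y - z‖ ^ 2 := by
    intro i _
    have : x i - z = (x i - y) + (y - z) := by abel
    rw [this, norm_add_sq_real]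
    ring
  rw [Finset.sum_congr rfl expand, Finset.sum_add_distrib, Finset.sum_add_distrib]
  have h0 : ∑ i ∈ t, 2 * (w i * (inner ℝ (x i - y) (y - z) : ℝ)) = 0 := by
    rw [← Finset.mul_sum]
    have : ∑ i ∈ t, w i * (inner ℝ (x i - y) (y - z) : ℝ)
        = (inner ℝ (∑ i ∈ t, w i • (x i - y)) (y - z) : ℝ) := by
      rw [sum_inner]
      exact Finset.sum_congr rfl fun i _ => (real_inner_smul_left _ _ _).symm
    rw [this, hzero, inner_zero_left, mul_zero]
  have h2 : (0:ℝ) ≤ ∑ i ∈ t, w i * ‖y - z‖ ^ 2 :=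
    Finset.sum_nonneg fun i hi => mul_nonneg (hw0 i hi) (sq_nonneg _)
  linarith

lemma key_cubic_aux (m : ℝ) (hm : 1 ≤ m) :
    (m - 1) ^ 2 ≤ m * (m - 1) * (2 * m - 1) / 3 := by
  nlinarith [mul_nonneg (sub_nonneg.2 hm) (sq_nonneg (m - 1))]

/-- Membership in a scaled closed unit ball. -/
lemma mem_smul_ball_aux {E : Type*} [NormedAddCommGroup E] [NormedSpace ℝ E]
    {r : ℝ} {v : E} (hv : ‖v‖ ≤ r) :
    v ∈ r • Metric.closedBall (0 : E) 1 := by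
  have hr : 0 ≤ r := le_trans (norm_nonneg v) hv
  rcases eq_or_lt_of_le hr with h | h
  · refine ⟨0, by simp, ?_⟩
    have : v = 0 := norm_le_zero_iff.mp (by rw [h]; exact hv)
    simp [this]
  · refine ⟨r⁻¹ • v, ?_, smul_inv_smul₀ (ne_of_gt h) v⟩
    rw [Metric.mem_closedBall, dist_zero_right, norm_smul, Real.norm_eq_abs,
      abs_of_pos (inv_pos.2 h)]
    rw [inv_mul_le_iff₀ h, mul_one]
    exact hv

theorem psi_convexHull_subset (d M : ℕ) (K L S Δt : ℝ) (hΔt : 0 < Δt)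
    (f : Fin M → EuclideanSpace ℝ (Fin d) → EuclideanSpace ℝ (Fin d))
    (hdiff : ∀ i, Differentiable ℝ (f i))
    (hK : ∀ i x, ‖f i x‖ ≤ K)
    (hL : ∀ i x, ‖fderiv ℝ (f i) x‖ ≤ L)
    (hS : ∀ i x z, ‖f i x - f i z - fderiv ℝ (f i) z (x - z)‖ ≤ S * ‖x - z‖ ^ 2)
    (z : EuclideanSpace ℝ (Fin d)) :
    setImage (fun x => {x} + Δt • convexHull ℝ (Set.range fun i => f i x))
        (convexHull ℝ (iterMap (fun x => ⋃ i, {x + Δt • f i x}) (M - 1) z)) ⊆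
      convexHull ℝ (iterMap (fun x => ⋃ i, {x + Δt • f i x}) M z) +
        (S * K ^ 2 * ((M : ℝ) * ((M : ℝ) - 1) * (2 * (M : ℝ) - 1) / 3) * Δt ^ 3) •
          Metric.closedBall (0 : EuclideanSpace ℝ (Fin d)) 1 := by
  classical
  set φ : EuclideanSpace ℝ (Fin d) → Set (EuclideanSpace ℝ (Fin d)) :=
    fun x => ⋃ i, {x + Δt • f i x} with hφdef
  set r : ℝ := S * K ^ 2 * ((M : ℝ) * ((M : ℝ) - 1) * (2 * (M : ℝ) - 1) / 3) * Δt ^ 3 with hrdef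
  rcases Nat.eq_zero_or_pos M with hM | hM
  · -- M = 0 : the left-hand side is empty
    subst hM
    intro p hp
    exfalso
    simp only [setImage, Set.mem_iUnion] at hp
    obtain ⟨y, _, hpy⟩ := hp
    rw [Set.range_eq_empty, convexHull_empty, Set.smul_set_empty, Set.add_empty] at hpy
    exact hpy
  -- now M ≥ 1
  have i₀ : Fin M := ⟨0, hM⟩
  have hK0 : 0 ≤ K := le_trans (norm_nonneg _) (hK i₀ z)
  -- every point of the m-fold iterate is within m*K*Δt of z
  have hbound : ∀ m x, x ∈ iterMap φ m z → ‖x - z‖ ≤ (m : ℝ) * (K * Δt) := by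
    intro m
    induction m with
    | zero =>
      intro x hx
      have : x = z := hx
      simp [this]
    | succ n ih =>
      intro x hx
      have hx' : x ∈ setImage φ (iterMap φ n z) := hx
      simp only [setImage, Set.mem_iUnion] at hx'
      obtain ⟨u, hu, hxu⟩ := hx'
      obtain ⟨i, hi⟩ := Set.mem_iUnion.mp hxu
      rw [Set.mem_singleton_iff] at hi
      subst hi
      have h1 : ‖u + Δt • f i u - z‖ ≤ ‖u - z‖ + ‖Δt • f i u‖ := by
        have : u + Δt • f i u - z = (u - z) + Δt • f i u := by abel
        rw [this]; exact norm_add_le _ _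
      have h2 : ‖Δt • f i u‖ ≤ Δt * K := by
        rw [norm_smul, Real.norm_eq_abs, abs_of_pos hΔt]
        exact mul_le_mul_of_nonneg_left (hK i u) hΔt.le
      have h3 := ih u hu
      push_cast
      nlinarith [h3, h2, h1]
  -- iterated images are nonempty
  have hne : ∀ m, (iterMap φ m z).Nonempty := by
    intro m
    induction m with
    | zero => exact ⟨z, rfl⟩
    | succ n ih =>
      obtain ⟨u, hu⟩ := ih
      refine ⟨u + Δt • f i₀ u, ?_⟩
      have : u + Δt • f i₀ u ∈ φ u := Set.mem_iUnion.2 ⟨i₀, rfl⟩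
      exact Set.mem_biUnion hu this
  rcases Nat.eq_zero_or_pos d with hd | hd
  · -- d = 0 : the space is a subsingleton
    subst hd
    haveI : Subsingleton (EuclideanSpace ℝ (Fin 0)) :=
      ⟨fun a b => by ext i; exact absurd i.2 (Nat.not_lt_zero _)⟩
    intro p _
    obtain ⟨a, ha⟩ := (hne M).mono (subset_convexHull ℝ _)
    have hb : (0 : EuclideanSpace ℝ (Fin 0)) ∈
        r • Metric.closedBall (0 : EuclideanSpace ℝ (Fin 0)) 1 :=
      ⟨0, by simp, smul_zero r⟩
    have := Set.add_mem_add ha hb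
    rwa [Subsingleton.elim p (a + 0)]
  -- d ≥ 1 : we can find a unit vector, hence S ≥ 0
  have hS0 : 0 ≤ S := by
    set e : EuclideanSpace ℝ (Fin d) := EuclideanSpace.single (⟨0, hd⟩ : Fin d) (1 : ℝ) with hedef
    have he : ‖e - 0‖ = 1 := by
      rw [sub_zero, hedef, EuclideanSpace.norm_single, norm_one]
    have := hS i₀ e 0
    rw [he] at this
    have h0 : (0:ℝ) ≤ S * 1 ^ 2 := le_trans (norm_nonneg _) this
    linarith
  -- main argument
  intro p hp
  simp only [setImage, Set.mem_iUnion] at hp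
  obtain ⟨y, hy, hpy⟩ := hp
  obtain ⟨a, ha, b, hb, hab⟩ := Set.mem_add.mp hpy
  rw [Set.mem_singleton_iff] at ha
  rw [ha] at hab
  obtain ⟨v, hv, hbv⟩ := hb
  have hbv' : Δt • v = b := hbv
  -- convex combination representations
  rw [convexHull_eq] at hy hv
  obtain ⟨ι, t, w, x, hw0, hw1, hxmem, hxy⟩ := hy
  obtain ⟨ι', t', w', c, hw0', hw1', hcmem, hcv⟩ := hv
  rw [Finset.centerMass_eq_of_sum_1 _ _ hw1] at hxy
  rw [Finset.centerMass_eq_of_sum_1 _ _ hw1'] at hcv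
  -- choose indices realizing the c i
  have hex : ∀ i, ∃ j : Fin M, i ∈ t' → f j y = c i := by
    intro i
    by_cases h : i ∈ t'
    · obtain ⟨j, hj⟩ := hcmem i h
      exact ⟨j, fun _ => hj⟩
    · exact ⟨i₀, fun h' => absurd h' h⟩
  choose k hk using hex
  -- the approximating convex combination
  set q : EuclideanSpace ℝ (Fin d) :=
    ∑ i ∈ t', w' i • (∑ j ∈ t, w j • (x j + Δt • f (k i) (x j))) with hqdef
  have hiter : iterMap φ M z = setImage φ (iterMap φ (M - 1) z) := by
    obtain ⟨n, rfl⟩ : ∃ n, M = n + 1 := ⟨M - 1, (Nat.succ_pred_eq_of_pos hM).symm⟩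
    rw [Nat.add_sub_cancel]
    rfl
  have hgmem : ∀ j ∈ t, ∀ κ : Fin M, x j + Δt • f κ (x j) ∈ iterMap φ M z := by
    intro j hj κ
    rw [hiter]
    exact Set.mem_biUnion (hxmem j hj) (Set.mem_iUnion.2 ⟨κ, rfl⟩)
  have hconv : Convex ℝ (convexHull ℝ (iterMap φ M z)) := convex_convexHull ℝ _
  have hqA : q ∈ convexHull ℝ (iterMap φ M z) := by
    refine hconv.sum_mem hw0' hw1' fun i _ => ?_
    exact hconv.sum_mem hw0 hw1 fun j hj =>
      subset_convexHull ℝ _ (hgmem j hj (k i))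
  -- the error estimate
  have hzero : ∑ j ∈ t, w j • (y - x j) = 0 := by
    simp only [smul_sub, Finset.sum_sub_distrib, hxy, ← Finset.sum_smul, hw1, one_smul, sub_self]
  set V : ℝ := ∑ j ∈ t, w j * ‖x j - y‖ ^ 2 with hVdef
  have hV0 : 0 ≤ V :=
    Finset.sum_nonneg fun j hj => mul_nonneg (hw0 j hj) (sq_nonneg _)
  have hDi : ∀ κ : Fin M, ‖f κ y - ∑ j ∈ t, w j • f κ (x j)‖ ≤ S * V := by
    intro κ
    set T := fderiv ℝ (f κ) y with hTdef
    have step1 : f κ y - ∑ j ∈ t, w j • f κ (x j)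
        = ∑ j ∈ t, w j • (f κ y - f κ (x j) - T (y - x j)) := by
      have e1 : ∑ j ∈ t, w j • (f κ y - f κ (x j) - T (y - x j))
          = (∑ j ∈ t, w j • (f κ y - f κ (x j))) - ∑ j ∈ t, w j • T (y - x j) := by
        simp only [smul_sub, Finset.sum_sub_distrib]
      have e2 : ∑ j ∈ t, w j • T (y - x j) = T (∑ j ∈ t, w j • (y - x j)) := by
        rw [map_sum]
        exact Finset.sum_congr rfl fun j _ => (T.map_smul _ _).symm
      have e3 : ∑ j ∈ t, w j • (f κ y - f κ (x j))
          = f κ y - ∑ j ∈ t, w j • f κ (x j) := by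
        simp only [smul_sub, Finset.sum_sub_distrib, ← Finset.sum_smul, hw1, one_smul]
      rw [e1, e2, e3, hzero, map_zero, sub_zero]
    rw [step1]
    have hterm : ∀ j ∈ t, ‖w j • (f κ y - f κ (x j) - T (y - x j))‖
        ≤ w j * (S * ‖x j - y‖ ^ 2) := by
      intro j hj
      rw [norm_smul, Real.norm_eq_abs, abs_of_nonneg (hw0 j hj)]
      refine mul_le_mul_of_nonneg_left ?_ (hw0 j hj)
      have : f κ y - f κ (x j) - T (y - x j)
          = -(f κ (x j) - f κ y - T (x j - y)) := by
        rw [map_sub, map_sub]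
        abel
      rw [this, norm_neg]
      exact hS κ (x j) y
    calc ‖∑ j ∈ t, w j • (f κ y - f κ (x j) - T (y - x j))‖
        ≤ ∑ j ∈ t, w j * (S * ‖x j - y‖ ^ 2) := norm_sum_le_of_le t hterm
      _ = S * V := by rw [hVdef, Finset.mul_sum]; exact Finset.sum_congr rfl fun j _ => by ring
  -- the identity p - q = Δt • ∑ w' i • (f (k i) y - ∑ w j • f (k i) (x j))
  have hp_eq : p = y + Δt • ∑ i ∈ t', w' i • f (k i) y := by
    rw [← hab, ← hbv', ← hcv]
    congr 1
    congr 1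
    exact Finset.sum_congr rfl fun i hi => by rw [hk i hi]
  have hq_eq : q = y + Δt • ∑ i ∈ t', w' i • (∑ j ∈ t, w j • f (k i) (x j)) := by
    rw [hqdef]
    have inner_eq : ∀ i ∈ t', (∑ j ∈ t, w j • (x j + Δt • f (k i) (x j)))
        = y + Δt • ∑ j ∈ t, w j • f (k i) (x j) := by
      intro i _
      rw [← hxy]
      simp only [smul_add, Finset.sum_add_distrib]
      congr 1
      rw [Finset.smul_sum]
      exact Finset.sum_congr rfl fun j _ => smul_comm _ _ _
    have step : ∑ i ∈ t', w' i • (∑ j ∈ t, w j • (x j + Δt • f (k i) (x j)))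
        = ∑ i ∈ t', w' i • (y + Δt • ∑ j ∈ t, w j • f (k i) (x j)) :=
      Finset.sum_congr rfl fun i hi => by rw [inner_eq i hi]
    rw [step]
    have A1 : ∑ i ∈ t', w' i • (y + Δt • ∑ j ∈ t, w j • f (k i) (x j))
        = (∑ i ∈ t', w' i • y)
          + ∑ i ∈ t', w' i • (Δt • ∑ j ∈ t, w j • f (k i) (x j)) := by
      simp only [smul_add, Finset.sum_add_distrib]
    rw [A1, ← Finset.sum_smul, hw1', one_smul]
    congr 1
    rw [Finset.smul_sum]
    exact Finset.sum_congr rfl fun i _ => smul_comm _ _ _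
  have hpq : p - q = Δt • ∑ i ∈ t', w' i •
      (f (k i) y - ∑ j ∈ t, w j • f (k i) (x j)) := by
    rw [hp_eq, hq_eq]
    simp only [smul_sub, Finset.sum_sub_distrib]
    abel
  -- norm estimate for p - q
  have hnorm : ‖p - q‖ ≤ Δt * (S * V) := by
    rw [hpq, norm_smul, Real.norm_eq_abs, abs_of_pos hΔt]
    refine mul_le_mul_of_nonneg_left ?_ hΔt.le
    calc ‖∑ i ∈ t', w' i • (f (k i) y - ∑ j ∈ t, w j • f (k i) (x j))‖
        ≤ ∑ i ∈ t', w' i * (S * V) := by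
          refine norm_sum_le_of_le t' fun i hi => ?_
          rw [norm_smul, Real.norm_eq_abs, abs_of_nonneg (hw0' i hi)]
          exact mul_le_mul_of_nonneg_left (hDi (k i)) (hw0' i hi)
      _ = S * V := by rw [← Finset.sum_mul, hw1', one_mul]
  -- bound V
  have hm1 : (1 : ℝ) ≤ (M : ℝ) := by exact_mod_cast hM
  have hR : V ≤ (((M : ℝ) - 1) * (K * Δt)) ^ 2 := by
    have step1 : V ≤ ∑ j ∈ t, w j * ‖x j - z‖ ^ 2 :=
      variance_le_aux t w x y z hw0 hw1 hxy
    have step2 : ∑ j ∈ t, w j * ‖x j - z‖ ^ 2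
        ≤ ∑ j ∈ t, w j * (((M : ℝ) - 1) * (K * Δt)) ^ 2 := by
      refine Finset.sum_le_sum fun j hj => ?_
      refine mul_le_mul_of_nonneg_left ?_ (hw0 j hj)
      have h1 := hbound (M - 1) (x j) (hxmem j hj)
      have hcast : ((M - 1 : ℕ) : ℝ) = (M : ℝ) - 1 := by
        rw [Nat.cast_sub hM, Nat.cast_one]
      rw [hcast] at h1
      exact pow_le_pow_left₀ (norm_nonneg _) h1 2
    have step3 : ∑ j ∈ t, w j * (((M : ℝ) - 1) * (K * Δt)) ^ 2
        = (((M : ℝ) - 1) * (K * Δt)) ^ 2 := by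
      rw [← Finset.sum_mul, hw1, one_mul]
    linarith
  -- final inequality
  have hfinal : ‖p - q‖ ≤ r := by
    have h1 : ‖p - q‖ ≤ Δt * (S * ((((M : ℝ) - 1) * (K * Δt)) ^ 2)) :=
      le_trans hnorm
        (mul_le_mul_of_nonneg_left (mul_le_mul_of_nonneg_left hR hS0) hΔt.le)
    have key : ((M : ℝ) - 1) ^ 2 ≤ (M : ℝ) * ((M : ℝ) - 1) * (2 * (M : ℝ) - 1) / 3 :=
      key_cubic_aux (M : ℝ) hm1
    have h2 : Δt * (S * ((((M : ℝ) - 1) * (K * Δt)) ^ 2)) ≤ r := by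
      rw [hrdef]
      have e1 : Δt * (S * ((((M : ℝ) - 1) * (K * Δt)) ^ 2))
          = (S * K ^ 2 * Δt ^ 3) * ((M : ℝ) - 1) ^ 2 := by ring
      have e2 : S * K ^ 2 * ((M : ℝ) * ((M : ℝ) - 1) * (2 * (M : ℝ) - 1) / 3) * Δt ^ 3
          = (S * K ^ 2 * Δt ^ 3) * ((M : ℝ) * ((M : ℝ) - 1) * (2 * (M : ℝ) - 1) / 3) := by ring
      rw [e1, e2]
      refine mul_le_mul_of_nonneg_left key ?_
      exact mul_nonneg (mul_nonneg hS0 (sq_nonneg K)) (pow_nonneg hΔt.le 3)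
    exact le_trans h1 h2
  have hball : p - q ∈ r • Metric.closedBall (0 : EuclideanSpace ℝ (Fin d)) 1 :=
    mem_smul_ball_aux hfinal
  have hmem := Set.add_mem_add hqA hball
  have hfix : q + (p - q) = p := by abel
  rwa [hfix] at hmem
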